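/- If x ≥ 0 and t > nT + x/v_f, then the Lax–Hopf solution associated with the n-th upstream boundary value condition satisfies M_{γ_n}(t, x) = Σ_{i=1}^{n} q_in(i)·T + ρ_c·v_f·(t − x/v_f − nT). -/

import Mathlib

/-- The triangular fundamental diagram: `ψ(ρ) = v_f·ρ` for `ρ ≤ ρ_c` and
`ψ(ρ) = w·(ρ − ρ_m)` otherwise. -/
noncomputable def fd (vf w ρc ρm : ℝ) (ρ : ℝ) : ℝ :=
  if ρ ≤ ρc then vf * ρ else w * (ρ - ρm)

/-- The transform `φ*(u) = sup_{p ∈ [0, ρ_m]} (p·u + ψ(p))`. -/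
noncomputable def phiStar (vf w ρc ρm : ℝ) (u : ℝ) : ℝ :=
  sSup ((fun p => p * u + fd vf w ρc ρm p) '' Set.Icc 0 ρm)

/-- The Lax–Hopf solution associated with a value condition `c : ℝ × ℝ → ℝ ∪ {+∞}`
(modeled with values in `EReal`):
`M_c(t, x) = inf { c(t − T, x + T·u) + T·φ*(u) : T ≥ 0, u ∈ [−v_f, −w] }`. -/
noncomputable def laxHopf (vf w ρc ρm : ℝ) (c : ℝ × ℝ → EReal) (t x : ℝ) : EReal :=
  ⨅ (T : ℝ) (_ : 0 ≤ T) (u : ℝ) (_ : u ∈ Set.Icc (-vf) (-w)),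
    c (t - T, x + T * u) + ((T * phiStar vf w ρc ρm u : ℝ) : EReal)


/-- The `n`-th upstream boundary value condition (at position `0`): for
`t ∈ [(n−1)T, nT]`, `γ_n(t, 0) = Σ_{i=1}^{n−1} q_in(i)·T + q_in(n)·(t − (n−1)T)`,
and `+∞` elsewhere. -/
noncomputable def upCond (T : ℝ) (qin : ℕ → ℝ) (n : ℕ) : ℝ × ℝ → EReal := fun p =>
  if p.2 = 0 ∧ ((n : ℝ) - 1) * T ≤ p.1 ∧ p.1 ≤ (n : ℝ) * T then
    ((((∑ i ∈ Finset.Icc 1 (n - 1), qin i * T)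
        + qin n * (p.1 - ((n : ℝ) - 1) * T)) : ℝ) : EReal)
  else ⊤

lemma phiStar_eq (vf ρc ρm w : ℝ) (hρc : 0 < ρc)
    (hρcm : ρc < ρm) (hw : w = vf * ρc / (ρc - ρm)) (u : ℝ)
    (hu : u ∈ Set.Icc (-vf) (-w)) :
    phiStar vf w ρc ρm u = ρc * (u + vf) := by
  have hne : ρc - ρm ≠ 0 := by linarith
  have hwc : w * (ρc - ρm) = vf * ρc := by rw [hw]; field_simp
  have hbound : ∀ y ∈ (fun p => p * u + fd vf w ρc ρm p) '' Set.Icc 0 ρm,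
      y ≤ ρc * (u + vf) := by
    rintro y ⟨p, ⟨hp0, hpm⟩, rfl⟩
    simp only [fd]
    split_ifs with h
    · nlinarith [mul_nonneg (by linarith [hu.1] : (0:ℝ) ≤ u + vf)
        (by linarith : (0:ℝ) ≤ ρc - p)]
    · push_neg at h
      nlinarith [mul_nonneg (by linarith : (0:ℝ) ≤ p - ρc)
        (by linarith [hu.2] : (0:ℝ) ≤ -w - u)]
  have hmem : ρc * (u + vf) ∈ (fun p => p * u + fd vf w ρc ρm p) '' Set.Icc 0 ρm :=
    ⟨ρc, ⟨le_of_lt hρc, le_of_lt hρcm⟩, by simp [fd]; ring⟩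
  exact le_antisymm (csSup_le ⟨_, hmem⟩ hbound) (le_csSup ⟨_, hbound⟩ hmem)

/-- If `x ≥ 0` and `t > nT + x/v_f`, then
`M_{γ_n}(t, x) = Σ_{i=1}^{n} q_in(i)·T + ρ_c·v_f·(t − x/v_f − nT)`. -/
theorem laxHopf_upCond_late (vf ρc ρm w T : ℝ) (hvf : 0 < vf) (hρc : 0 < ρc)
    (hρcm : ρc < ρm) (hw : w = vf * ρc / (ρc - ρm)) (hT : 0 < T)
    (n : ℕ) (hn : 1 ≤ n) (qin : ℕ → ℝ)
    (hq : ∀ i : ℕ, 1 ≤ i → i ≤ n → qin i ∈ Set.Icc 0 (ρc * vf))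
    (t x : ℝ) (hx : 0 ≤ x) (ht : t > (n : ℝ) * T + x / vf) :
    laxHopf vf w ρc ρm (upCond T qin n) t x =
      ((((∑ i ∈ Finset.Icc 1 n, qin i * T)
          + ρc * vf * (t - x / vf - (n : ℝ) * T)) : ℝ) : EReal) := by
  obtain ⟨m, rfl⟩ : ∃ m, n = m + 1 := ⟨n - 1, (Nat.succ_pred_eq_of_pos hn).symm⟩
  set n := m + 1
  have hxvf : 0 ≤ x / vf := div_nonneg hx hvf.le
  have hT0 : (0:ℝ) < t - (n:ℝ) * T := by linarith
  have hsum : ∑ i ∈ Finset.Icc 1 n, qin i * T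
      = (∑ i ∈ Finset.Icc 1 (n - 1), qin i * T) + qin n * T := by
    simpa [n] using Finset.sum_Icc_succ_top (by omega : 1 ≤ m + 1) (fun i => qin i * T)
  have hqn := hq n (by omega) le_rfl
  have hwneg : w < 0 := by
    rw [hw]; exact div_neg_of_pos_of_neg (by positivity) (by linarith)
  have hxv : vf * (x / vf) = x := mul_div_cancel₀ x hvf.ne'
  apply le_antisymm
  · -- upper bound: witness T₀ = t - nT, u₀ = -x/T₀
    set T0 : ℝ := t - (n:ℝ) * T with hT0def
    set u0 : ℝ := -x / T0 with hu0def
    clear_value u0 T0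
    have hu0mem : u0 ∈ Set.Icc (-vf) (-w) := by
      constructor
      · rw [hu0def, le_div_iff₀ hT0]
        nlinarith [hxv]
      · rw [hu0def]
        have : -x / T0 ≤ 0 := div_nonpos_of_nonpos_of_nonneg (by linarith) hT0.le
        linarith
    refine iInf_le_of_le T0 (iInf_le_of_le hT0.le (iInf_le_of_le u0
      (iInf_le_of_le hu0mem ?_)))
    have h0 : x + T0 * u0 = 0 := by rw [hu0def]; field_simp; ring
    have hpt : (t - T0, x + T0 * u0) = ((n:ℝ) * T, 0) :=
      Prod.ext (by rw [hT0def]; ring) h0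
    rw [hpt, phiStar_eq vf ρc ρm w hρc hρcm hw u0 hu0mem]
    have hcond : (0:ℝ) = 0 ∧ ((n:ℝ) - 1) * T ≤ (n:ℝ) * T ∧ (n:ℝ) * T ≤ (n:ℝ) * T :=
      ⟨rfl, by nlinarith, le_rfl⟩
    rw [upCond, if_pos hcond, ← EReal.coe_add, EReal.coe_le_coe_iff]
    dsimp only
    have hu0val : T0 * u0 = -x := by rw [hu0def]; field_simp
    have hval : T0 * (ρc * (u0 + vf)) = ρc * vf * T0 - ρc * x := by
      linear_combination ρc * hu0val
    have hx2 : ρc * vf * (t - x / vf - (n:ℝ) * T) = ρc * vf * (t - (n:ℝ) * T) - ρc * x := by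
      linear_combination (-ρc) * hxv
    have h3 : ρc * vf * T0 = ρc * vf * (t - (n:ℝ) * T) := by rw [hT0def]
    rw [hsum]
    linarith [hval, hx2, h3]
  · -- lower bound
    refine le_iInf fun T' => le_iInf fun hT' => le_iInf fun u => le_iInf fun hu => ?_
    rw [phiStar_eq vf ρc ρm w hρc hρcm hw u hu, upCond]
    by_cases hcnd : x + T' * u = 0 ∧ ((n:ℝ) - 1) * T ≤ t - T' ∧ t - T' ≤ (n:ℝ) * T
    · rw [if_pos hcnd, ← EReal.coe_add, EReal.coe_le_coe_iff]
      dsimp only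
      obtain ⟨h1, h2, h3⟩ := hcnd
      have hTu : T' * u = -x := by linarith
      have hkey : T' * (ρc * (u + vf)) = ρc * vf * T' - ρc * x := by
        have h : ρc * (T' * u) = -(ρc * x) := by rw [hTu]; ring
        nlinarith [h]
      rw [hsum]
      nlinarith [mul_nonneg (by linarith [hqn.2] : (0:ℝ) ≤ ρc * vf - qin n)
        (by linarith : (0:ℝ) ≤ T' - (t - (n:ℝ) * T)), hxv, hkey]
    · rw [if_neg hcnd, EReal.top_add_coe]
      exact le_top
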